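/- Let b > 0, let τ be a real random variable with the Rayleigh distribution of scale b (law given by density τ ↦ (τ/b²)·exp(−τ²/(2b²)) on τ ≥ 0 with respect to Lebesgue measure), let g be a standard Gaussian random variable (mean 0, variance 1), and assume τ and g are independent. Then the product v = τ·g has the Laplace distribution with mean 0 and scale b, i.e., the law of v is the measure on ℝ with density v ↦ (1/(2b))·exp(−|v|/b) with respect to Lebesgue measure. -/

import Mathlib

open Real MeasureTheory ProbabilityTheory

section RMGAux
open Set
open scoped ENNReal NNReal

lemma phi_hasDeriv {sa sc : ℝ} (t : ℝ) (ht : t ≠ 0) :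
    HasDerivAt (fun t : ℝ => sa * t - sc / t) (sa + sc / t ^ 2) t := by
  have h1 : HasDerivAt (fun t : ℝ => sa * t) sa t := by
    simpa using (hasDerivAt_id t).const_mul sa
  have h2 : HasDerivAt (fun t : ℝ => sc / t) (sc * -(t ^ 2)⁻¹) t := by
    simpa [div_eq_mul_inv] using (hasDerivAt_inv ht).const_mul sc
  have := h1.sub h2
  refine this.congr_deriv ?_
  ring

lemma phi_image {sa sc : ℝ} (ha : 0 < sa) (hc : 0 < sc) :
    (fun t : ℝ => sa * t - sc / t) '' Ioi 0 = univ := by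
  ext u
  simp only [mem_univ, iff_true, mem_image, mem_Ioi]
  set r := Real.sqrt (u ^ 2 + 4 * sa * sc) with hr
  have hr2 : r ^ 2 = u ^ 2 + 4 * sa * sc := Real.sq_sqrt (by nlinarith)
  have hrpos : -u < r := by
    nlinarith [Real.sqrt_nonneg (u ^ 2 + 4 * sa * sc), abs_nonneg u, sq_abs u,
      neg_abs_le u, le_abs_self u]
  have hur : (0:ℝ) < u + r := by linarith
  have hne : u + r ≠ 0 := ne_of_gt hur
  refine ⟨(u + r) / (2 * sa), by positivity, ?_⟩
  field_simp
  nlinarith [hr2]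

lemma phi_inj {sa sc : ℝ} (ha : 0 < sa) (hc : 0 < sc) :
    InjOn (fun t : ℝ => sa * t - sc / t) (Ioi 0) := by
  have : StrictMonoOn (fun t : ℝ => sa * t - sc / t) (Ioi 0) := by
    intro x hx y hy hxy
    simp only [mem_Ioi] at hx hy
    have h1 : sc / y < sc / x := by gcongr
    have h2 : sa * x < sa * y := by gcongr
    simp only
    linarith
  exact this.injOn
lemma psi_image {k : ℝ} (hk : 0 < k) : (fun s : ℝ => k / s) '' Ioi 0 = Ioi 0 := by
  ext u
  simp only [mem_image, mem_Ioi]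
  constructor
  · rintro ⟨s, hs, rfl⟩; positivity
  · intro hu; exact ⟨k / u, by positivity, by field_simp⟩

lemma psi_hasDeriv {k : ℝ} (t : ℝ) (ht : t ≠ 0) :
    HasDerivAt (fun s : ℝ => k / s) (-(k / t ^ 2)) t := by
  have := (hasDerivAt_inv ht).const_mul k
  simp only [div_eq_mul_inv]
  refine this.congr_deriv ?_
  ring

lemma psi_inj {k : ℝ} (hk : 0 < k) : InjOn (fun s : ℝ => k / s) (Ioi 0) := by
  intro x hx y hy h
  simp only [mem_Ioi] at hx hy
  simp only at h
  rw [div_eq_div_iff (ne_of_gt hx) (ne_of_gt hy)] at h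
  have : k * y = k * x := by linarith [h]
  exact (mul_left_cancel₀ (ne_of_gt hk) this).symm

lemma glasser_integrableOn {a c : ℝ} (ha : 0 < a) (hc : 0 ≤ c) :
    IntegrableOn (fun t : ℝ => Real.exp (-(a * t ^ 2) - c / t ^ 2)) (Ioi 0) := by
  refine Integrable.mono' ((integrable_exp_neg_mul_sq ha).integrableOn) ?_ ?_
  · exact (Real.measurable_exp.comp (by fun_prop)).aestronglyMeasurable
  · refine ae_of_all _ fun t => ?_
    rw [Real.norm_eq_abs, abs_of_nonneg (Real.exp_nonneg _)]
    exact Real.exp_le_exp.mpr (by nlinarith [div_nonneg hc (sq_nonneg t)])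
lemma glasser {a c : ℝ} (ha : 0 < a) (hc : 0 ≤ c) :
    ∫ t in Ioi (0:ℝ), Real.exp (-(a * t ^ 2) - c / t ^ 2)
      = Real.sqrt (π / a) / 2 * Real.exp (-2 * Real.sqrt (a * c)) := by
  rcases eq_or_lt_of_le hc with hc0 | hc0
  · subst hc0
    simp only [zero_div, sub_zero, mul_zero, Real.sqrt_zero, mul_zero, neg_zero, Real.exp_zero,
      mul_one]
    simpa [neg_mul] using integral_gaussian_Ioi a
  · set sa := Real.sqrt a with hsa
    set sc := Real.sqrt c with hsc
    have hsa0 : 0 < sa := Real.sqrt_pos.mpr ha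
    have hsc0 : 0 < sc := Real.sqrt_pos.mpr hc0
    have hsa2 : sa ^ 2 = a := Real.sq_sqrt ha.le
    have hsc2 : sc ^ 2 = c := Real.sq_sqrt hc0.le
    have hsasc : sa * sc = Real.sqrt (a * c) := (Real.sqrt_mul ha.le c).symm
    set E : ℝ → ℝ := fun t => Real.exp (-(a * t ^ 2) - c / t ^ 2) with hE
    set I := ∫ t in Ioi (0:ℝ), E t with hI
    have hderiv : ∀ x ∈ Ioi (0:ℝ), HasDerivWithinAt (fun t : ℝ => sa * t - sc / t)
        (sa + sc / x ^ 2) (Ioi 0) x :=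
      fun x hx => (phi_hasDeriv x (ne_of_gt hx)).hasDerivWithinAt
    -- pointwise identity on Ioi 0
    have hpt : ∀ x ∈ Ioi (0:ℝ),
        |sa + sc / x ^ 2| • Real.exp (-(sa * x - sc / x) ^ 2)
          = Real.exp (2 * Real.sqrt (a * c)) * ((sa + sc / x ^ 2) * E x) := by
      intro x hx
      have hx0 : x ≠ 0 := ne_of_gt hx
      have habs : |sa + sc / x ^ 2| = sa + sc / x ^ 2 := by
        rw [abs_of_pos]; positivity
      have hsq : -(sa * x - sc / x) ^ 2 = 2 * Real.sqrt (a * c) + (-(a * x ^ 2) - c / x ^ 2) := by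
        rw [← hsasc, ← hsa2, ← hsc2]; field_simp; ring
      rw [habs, smul_eq_mul, hsq, Real.exp_add]
      ring
    -- step A
    have hA : Real.sqrt π
        = ∫ t in Ioi (0:ℝ), Real.exp (2 * Real.sqrt (a * c)) * ((sa + sc / t ^ 2) * E t) := by
      have h0 : Real.sqrt π = ∫ u : ℝ, Real.exp (-u ^ 2) := by
        simpa [neg_mul] using (integral_gaussian 1).symm
      rw [h0, ← setIntegral_univ, ← phi_image hsa0 hsc0,
        integral_image_eq_integral_abs_deriv_smul measurableSet_Ioi hderiv (phi_inj hsa0 hsc0)]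
      exact setIntegral_congr_fun measurableSet_Ioi hpt
    -- integrability of the combined integrand
    have hcomb : IntegrableOn (fun t : ℝ => (sa + sc / t ^ 2) * E t) (Ioi 0) := by
      have := (integrableOn_image_iff_integrableOn_abs_deriv_smul measurableSet_Ioi hderiv
        (phi_inj hsa0 hsc0) (fun u : ℝ => Real.exp (-u ^ 2))).mp ?_
      · have h2 : IntegrableOn (fun t : ℝ =>
            Real.exp (2 * Real.sqrt (a * c)) * ((sa + sc / t ^ 2) * E t)) (Ioi 0) :=
          IntegrableOn.congr_fun this (fun x hx => hpt x hx) measurableSet_Ioi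
        have h3 := h2.const_mul (Real.exp (2 * Real.sqrt (a * c)))⁻¹
        refine IntegrableOn.congr_fun h3 ?_ measurableSet_Ioi
        intro x _
        simp only
        rw [← mul_assoc, inv_mul_cancel₀ (Real.exp_ne_zero _), one_mul]
      · rw [phi_image hsa0 hsc0, integrableOn_univ]
        simpa [neg_mul] using (integrable_exp_neg_mul_sq (one_pos))
    have h1 : IntegrableOn (fun t : ℝ => sa * E t) (Ioi 0) :=
      (glasser_integrableOn ha hc).const_mul sa
    have h2 : IntegrableOn (fun t : ℝ => (sc / t ^ 2) * E t) (Ioi 0) := by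
      refine IntegrableOn.congr_fun (hcomb.sub h1) ?_ measurableSet_Ioi
      intro x _; simp only [Pi.sub_apply]; ring
    -- step C: split
    have hsplit : ∫ t in Ioi (0:ℝ), (sa + sc / t ^ 2) * E t
        = sa * I + ∫ t in Ioi (0:ℝ), (sc / t ^ 2) * E t := by
      rw [hI, ← integral_const_mul, ← integral_add (h1) (h2)]
      congr 1 with t
      ring
    -- step D: second substitution
    have hD : ∫ t in Ioi (0:ℝ), (sc / t ^ 2) * E t = sa * I := by
      set k := sc / sa with hk
      have hk0 : 0 < k := by positivity
      have hderiv' : ∀ x ∈ Ioi (0:ℝ), HasDerivWithinAt (fun s : ℝ => k / s)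
          (-(k / x ^ 2)) (Ioi 0) x :=
        fun x hx => (psi_hasDeriv x (ne_of_gt hx)).hasDerivWithinAt
      have := integral_image_eq_integral_abs_deriv_smul measurableSet_Ioi hderiv' (psi_inj hk0)
        (fun t : ℝ => (sc / t ^ 2) * E t)
      rw [psi_image hk0] at this
      rw [this, hI, ← integral_const_mul]
      refine setIntegral_congr_fun measurableSet_Ioi ?_
      intro x hx
      have hx0 : x ≠ 0 := ne_of_gt hx
      have habs : |(-(k / x ^ 2))| = k / x ^ 2 := by
        rw [abs_neg, abs_of_pos]; positivity
      show |(-(k / x ^ 2))| • (sc / (k / x) ^ 2 * E (k / x)) = sa * E x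
      rw [habs, smul_eq_mul, hE]
      have hak : a * (k / x) ^ 2 = c / x ^ 2 := by
        rw [hk, ← hsa2, ← hsc2]; field_simp
      have hck : c / (k / x) ^ 2 = a * x ^ 2 := by
        rw [hk, ← hsa2, ← hsc2]; field_simp
      simp only
      rw [hak, hck]
      have : sc / (k / x) ^ 2 = sa ^ 2 / sc * x ^ 2 := by
        rw [hk]; field_simp
      rw [this]
      have hkx : k / x ^ 2 * (sa ^ 2 / sc * x ^ 2) = sa := by
        rw [hk]; field_simp
      rw [show -(c / x ^ 2) - a * x ^ 2 = -(a * x ^ 2) - c / x ^ 2 by ring, ← mul_assoc, hkx]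
    -- conclude
    have hfin : Real.sqrt π = Real.exp (2 * Real.sqrt (a * c)) * (2 * sa * I) := by
      rw [hA, integral_const_mul, hsplit, hD]; ring
    have hexp : Real.exp (2 * Real.sqrt (a * c)) ≠ 0 := Real.exp_ne_zero _
    have hIval : I = Real.sqrt π / (2 * sa) * Real.exp (-(2 * Real.sqrt (a * c))) := by
      rw [Real.exp_neg]
      field_simp at hfin ⊢
      nlinarith [hfin]
    rw [← hI] at *
    rw [hIval]
    rw [show (-2 : ℝ) * Real.sqrt (a * c) = -(2 * Real.sqrt (a * c)) by ring]
    congr 1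
    rw [Real.sqrt_div Real.pi_nonneg a]
    rw [div_div, ← hsa, mul_comm]
lemma inner_lintegral {b : ℝ} (hb : 0 < b) (v : ℝ) :
    ∫⁻ t in Ioi (0:ℝ), ENNReal.ofReal
        ((t / b ^ 2 * Real.exp (-t ^ 2 / (2 * b ^ 2))) *
          ((Real.sqrt (2 * π * t ^ 2))⁻¹ * Real.exp (-(v - 0) ^ 2 / (2 * t ^ 2))))
      = ENNReal.ofReal ((1 / (2 * b)) * Real.exp (-|v| / b)) := by
  have hbne : b ≠ 0 := hb.ne'
  set a : ℝ := 1 / (2 * b ^ 2) with ha_def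
  set c : ℝ := v ^ 2 / 2 with hc_def
  have ha : 0 < a := by positivity
  have hc : 0 ≤ c := by positivity
  set C : ℝ := (b ^ 2 * Real.sqrt (2 * π))⁻¹ with hC_def
  have hCpos : 0 < C := by positivity
  -- pointwise identity on Ioi 0
  have hpt : ∀ t ∈ Ioi (0:ℝ),
      (t / b ^ 2 * Real.exp (-t ^ 2 / (2 * b ^ 2))) *
          ((Real.sqrt (2 * π * t ^ 2))⁻¹ * Real.exp (-(v - 0) ^ 2 / (2 * t ^ 2)))
        = C * Real.exp (-(a * t ^ 2) - c / t ^ 2) := by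
    intro t ht
    have ht0 : (0:ℝ) < t := ht
    have hsqrt : Real.sqrt (2 * π * t ^ 2) = Real.sqrt (2 * π) * t := by
      rw [Real.sqrt_mul (by positivity) (t ^ 2), Real.sqrt_sq ht0.le]
    have hexp : Real.exp (-t ^ 2 / (2 * b ^ 2)) * Real.exp (-(v - 0) ^ 2 / (2 * t ^ 2))
        = Real.exp (-(a * t ^ 2) - c / t ^ 2) := by
      rw [← Real.exp_add]
      congr 1
      have hbne : b ≠ 0 := hb.ne'
      have htne : t ≠ 0 := ht0.ne'
      rw [ha_def, hc_def]
      field_simp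
      ring
    rw [hsqrt, ← hexp]
    have h2π : Real.sqrt (2 * π) > 0 := by positivity
    field_simp [hC_def]
    ring_nf
    rw [hC_def, mul_comm π 2]
    field_simp
  rw [setLIntegral_congr_fun measurableSet_Ioi
    (fun t ht => by rw [hpt t ht])]
  have hint : IntegrableOn (fun t : ℝ => C * Real.exp (-(a * t ^ 2) - c / t ^ 2)) (Ioi 0) :=
    (glasser_integrableOn ha hc).const_mul C
  rw [← ofReal_integral_eq_lintegral_ofReal hint
    (ae_of_all _ (fun t => by positivity))]
  congr 1
  rw [integral_const_mul, glasser ha hc]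
  have h1 : Real.sqrt (π / a) = Real.sqrt (2 * π) * b := by
    rw [ha_def, show π / (1 / (2 * b ^ 2)) = 2 * π * b ^ 2 by field_simp,
      Real.sqrt_mul (by positivity) (b ^ 2), Real.sqrt_sq hb.le]
  have h2 : -2 * Real.sqrt (a * c) = -|v| / b := by
    rw [ha_def, hc_def, show 1 / (2 * b ^ 2) * (v ^ 2 / 2) = (v / (2 * b)) ^ 2 by
      rw [div_pow, one_div_mul_eq_div, div_div, eq_div_iff (by positivity),
        div_mul_eq_mul_div, div_eq_iff (by positivity)]; ring,
      Real.sqrt_sq_eq_abs, abs_div, abs_of_pos (by positivity : (0:ℝ) < 2 * b)]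
    field_simp
  rw [h1, h2, hC_def]
  have h2π : (0:ℝ) < Real.sqrt (2 * π) := by positivity
  field_simp
/-- If `τ` is Rayleigh-distributed with scale `b > 0`, `g` is a standard Gaussian random
variable, and `τ` and `g` are independent, then `τ · g` has the Laplace distribution with
mean `0` and scale `b`. -/
theorem rayleigh_mul_gaussian_eq_laplace
    {Ω : Type*} [MeasurableSpace Ω] {P : Measure Ω} [IsProbabilityMeasure P]
    (b : ℝ) (hb : 0 < b) (τ g : Ω → ℝ) (hτ : Measurable τ) (hg : Measurable g)
    (hτ_law : Measure.map τ P = volume.withDensity (fun t =>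
      ENNReal.ofReal (if 0 ≤ t then (t / b ^ 2) * Real.exp (-t ^ 2 / (2 * b ^ 2)) else 0)))
    (hg_law : Measure.map g P = gaussianReal 0 1)
    (h_indep : IndepFun τ g P) :
    Measure.map (fun ω => τ ω * g ω) P = volume.withDensity (fun v =>
      ENNReal.ofReal ((1 / (2 * b)) * Real.exp (-|v| / b))) := by
  have hprod : Measure.map (fun ω => (τ ω, g ω)) P
      = (Measure.map τ P).prod (Measure.map g P) :=
    (indepFun_iff_map_prod_eq_prod_map_map hτ.aemeasurable hg.aemeasurable).mp h_indep
  have hmul : Measurable (fun p : ℝ × ℝ => p.1 * p.2) := measurable_fst.mul measurable_snd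
  have hmap : Measure.map (fun ω => τ ω * g ω) P
      = Measure.map (fun p : ℝ × ℝ => p.1 * p.2) ((Measure.map τ P).prod (Measure.map g P)) := by
    rw [← hprod, Measure.map_map hmul (hτ.prodMk hg)]
    rfl
  rw [hmap, hτ_law, hg_law]
  -- density of the Rayleigh law
  set f : ℝ → ℝ≥0∞ := fun t =>
    ENNReal.ofReal (if 0 ≤ t then (t / b ^ 2) * Real.exp (-t ^ 2 / (2 * b ^ 2)) else 0) with hf_def
  have hf_meas : Measurable f := by
    apply Measurable.ennreal_ofReal
    exact Measurable.ite measurableSet_Ici (by fun_prop) measurable_const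
  ext s hs
  have hsT : MeasurableSet ((fun p : ℝ × ℝ => p.1 * p.2) ⁻¹' s) := hmul hs
  rw [Measure.map_apply hmul hs, Measure.prod_apply hsT]
  have hF_meas : Measurable (fun t : ℝ =>
      gaussianReal 0 1 (Prod.mk t ⁻¹' ((fun p : ℝ × ℝ => p.1 * p.2) ⁻¹' s))) :=
    measurable_measure_prodMk_left hsT
  rw [lintegral_withDensity_eq_lintegral_mul volume hf_meas hF_meas]
  -- restrict to Ioi 0
  have hzero : ∀ t : ℝ, t ∉ Ioi (0:ℝ) →
      (f * fun t => gaussianReal 0 1 (Prod.mk t ⁻¹' ((fun p : ℝ × ℝ => p.1 * p.2) ⁻¹' s))) t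
        = 0 := by
    intro t ht
    simp only [mem_Ioi, not_lt] at ht
    have : f t = 0 := by
      rcases lt_or_eq_of_le ht with h | h
      · simp [hf_def, not_le.mpr h]
      · subst h; simp [hf_def]
    simp [Pi.mul_apply, this]
  have hrestrict : ∫⁻ t, (f * fun t =>
        gaussianReal 0 1 (Prod.mk t ⁻¹' ((fun p : ℝ × ℝ => p.1 * p.2) ⁻¹' s))) t
      = ∫⁻ t in Ioi (0:ℝ), (f * fun t =>
        gaussianReal 0 1 (Prod.mk t ⁻¹' ((fun p : ℝ × ℝ => p.1 * p.2) ⁻¹' s))) t := by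
    rw [← lintegral_indicator measurableSet_Ioi _]
    congr 1 with t
    by_cases ht : t ∈ Ioi (0:ℝ)
    · rw [indicator_of_mem ht]
    · rw [indicator_of_notMem ht, hzero t ht]
  rw [hrestrict]
  -- on Ioi 0, rewrite as double lintegral
  have hstep : ∀ t ∈ Ioi (0:ℝ),
      (f * fun t => gaussianReal 0 1 (Prod.mk t ⁻¹' ((fun p : ℝ × ℝ => p.1 * p.2) ⁻¹' s))) t
        = ∫⁻ v in s, ENNReal.ofReal
            ((t / b ^ 2 * Real.exp (-t ^ 2 / (2 * b ^ 2))) *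
              ((Real.sqrt (2 * π * (t ^ 2 : ℝ)))⁻¹ * Real.exp (-(v - 0) ^ 2 / (2 * (t ^ 2 : ℝ))))) := by
    intro t ht
    have ht0 : (0:ℝ) < t := ht
    have hset : Prod.mk t ⁻¹' ((fun p : ℝ × ℝ => p.1 * p.2) ⁻¹' s) = (t * ·) ⁻¹' s := rfl
    have hmapg : gaussianReal 0 1 ((t * ·) ⁻¹' s)
        = gaussianReal 0 (⟨t ^ 2, sq_nonneg t⟩ * 1) s := by
      rw [← Measure.map_apply (measurable_const_mul t) hs, gaussianReal_map_const_mul t, mul_zero]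
      rfl
    have hvne : (⟨t ^ 2, sq_nonneg t⟩ * 1 : ℝ≥0) ≠ 0 := by
      intro h
      have := congrArg NNReal.toReal h
      change t ^ 2 * 1 = (0:ℝ) at this
      rw [mul_one] at this
      exact (by positivity : (0:ℝ) < t ^ 2).ne' this
    rw [Pi.mul_apply, hset, hmapg, gaussianReal_apply _ hvne s,
      ← lintegral_const_mul _ (measurable_gaussianPDF _ _)]
    refine setLIntegral_congr_fun hs (fun v _ => ?_)
    have hfval : f t = ENNReal.ofReal (t / b ^ 2 * Real.exp (-t ^ 2 / (2 * b ^ 2))) := by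
      simp [hf_def, if_pos ht0.le]
    rw [hfval, gaussianPDF, ← ENNReal.ofReal_mul (by positivity)]
    congr 1
    have hv : (⟨t ^ 2, sq_nonneg t⟩ * 1 : ℝ≥0).toReal = t ^ 2 := by
      show t ^ 2 * 1 = t ^ 2
      ring
    rw [gaussianPDFReal, hv]
  rw [setLIntegral_congr_fun measurableSet_Ioi hstep]
  -- swap
  have hWmeas : Measurable (fun p : ℝ × ℝ => ENNReal.ofReal
      ((p.1 / b ^ 2 * Real.exp (-p.1 ^ 2 / (2 * b ^ 2))) *
        ((Real.sqrt (2 * π * p.1 ^ 2))⁻¹ * Real.exp (-(p.2 - 0) ^ 2 / (2 * p.1 ^ 2))))) := by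
    fun_prop
  rw [lintegral_lintegral_swap hWmeas.aemeasurable]
  rw [withDensity_apply _ hs]
  refine setLIntegral_congr_fun hs (fun v _ => ?_)
  exact inner_lintegral hb v

end RMGAux
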